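/- Let R be a commutative noetherian ring and C an ideal of R that is a semidualizing R-module. Then Hom_R(R ⋈ C, C) ≅ R ⋈ C as R ⋈ C-modules, and Ext_R^i(R ⋈ C, C) = 0 for all i ≥ 1. -/

import Mathlib

universe u

open TensorProduct CategoryTheory

noncomputable section




/-- The amalgamated duplication `R ⋈ C` of a ring `R` along an ideal `C`:
the abelian group `R ⊕ C` with multiplication
`(r, c) * (r', c') = (r * r', r * c' + r' * c + c * c')`. -/
def AmalgDup (R : Type u) [CommRing R] (C : Ideal R) : Type u := R × C

namespace AmalgDup

variable {R : Type u} [CommRing R] {C : Ideal R}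

/-- Build an element of `R ⋈ C` from its components. -/
def mk (r : R) (c : C) : AmalgDup R C := (r, c)

/-- First component. -/
def fst (p : AmalgDup R C) : R := p.1

/-- Second component. -/
def snd (p : AmalgDup R C) : C := p.2

theorem ext' {p q : AmalgDup R C} (h1 : p.fst = q.fst) (h2 : (p.snd : R) = (q.snd : R)) :
    p = q :=
  Prod.ext h1 (Subtype.ext h2)

instance : AddCommGroup (AmalgDup R C) := inferInstanceAs (AddCommGroup (R × C))

instance : Mul (AmalgDup R C) :=
  ⟨fun p q => mk (p.fst * q.fst)
    ⟨p.fst * (q.snd : R) + q.fst * (p.snd : R) + (p.snd : R) * (q.snd : R),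
      add_mem (add_mem (C.mul_mem_left _ q.snd.2) (C.mul_mem_left _ p.snd.2))
        (C.mul_mem_left _ q.snd.2)⟩⟩

instance : One (AmalgDup R C) := ⟨mk 1 0⟩

@[simp] theorem mk_fst (r : R) (c : C) : (mk r c : AmalgDup R C).fst = r := rfl

@[simp] theorem mk_snd (r : R) (c : C) : ((mk r c : AmalgDup R C).snd : R) = (c : R) := rfl

@[simp] theorem mul_fst (p q : AmalgDup R C) : (p * q).fst = p.fst * q.fst := rfl

@[simp] theorem mul_snd (p q : AmalgDup R C) :
    ((p * q).snd : R) = p.fst * (q.snd : R) + q.fst * (p.snd : R) + (p.snd : R) * (q.snd : R) :=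
  rfl

@[simp] theorem add_fst (p q : AmalgDup R C) : (p + q).fst = p.fst + q.fst := rfl

@[simp] theorem add_snd (p q : AmalgDup R C) :
    ((p + q).snd : R) = (p.snd : R) + (q.snd : R) := rfl

@[simp] theorem one_fst : (1 : AmalgDup R C).fst = 1 := rfl

@[simp] theorem one_snd : ((1 : AmalgDup R C).snd : R) = 0 := rfl

@[simp] theorem zero_fst : (0 : AmalgDup R C).fst = 0 := rfl

@[simp] theorem zero_snd : ((0 : AmalgDup R C).snd : R) = 0 := rfl

instance instCommRing : CommRing (AmalgDup R C) :=
  { (inferInstance : AddCommGroup (AmalgDup R C)), (inferInstance : Mul (AmalgDup R C)),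
    (inferInstance : One (AmalgDup R C)) with
    mul_assoc := fun a b c => ext' (by simp [mul_assoc]) (by simp; ring)
    one_mul := fun a => ext' (by simp) (by simp)
    mul_one := fun a => ext' (by simp) (by simp)
    left_distrib := fun a b c => ext' (by simp [mul_add]) (by simp; ring)
    right_distrib := fun a b c => ext' (by simp [add_mul]) (by simp; ring)
    zero_mul := fun a => ext' (by simp) (by simp)
    mul_zero := fun a => ext' (by simp) (by simp)
    mul_comm := fun a b => ext' (by simp [mul_comm]) (by simp; ring) }

/-- The canonical inclusion `R → R ⋈ C`. -/
def incl : R →+* AmalgDup R C where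
  toFun r := mk r 0
  map_one' := rfl
  map_mul' r s := (ext' (by simp) (by simp)).symm
  map_zero' := rfl
  map_add' r s := (ext' (by simp) (by simp)).symm

/-- The canonical projection `R ⋈ C → R`. -/
def proj : AmalgDup R C →+* R where
  toFun p := p.fst
  map_one' := rfl
  map_mul' _ _ := rfl
  map_zero' := rfl
  map_add' _ _ := rfl

end AmalgDup





/-- The `S`-module structure on `Hom_R(S, M)` coming from the `S`-action on the first slot:
`(s • φ) t = φ (s * t)`. -/
def homModS {R S : Type u} [CommRing R] [CommRing S] [Algebra R S]
    (M : Type u) [AddCommGroup M] [Module R M] :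
    Module S (S →ₗ[R] M) where
  smul s φ := φ.comp (LinearMap.mulLeft R s)
  one_smul φ := by
    ext t
    show φ (1 * t) = φ t
    rw [one_mul]
  mul_smul s s' φ := by
    ext t
    show φ ((s * s') * t) = φ (s' * (s * t))
    rw [mul_assoc, mul_left_comm]
  smul_zero s := by ext t; rfl
  smul_add s φ ψ := by ext t; rfl
  add_smul s s' φ := by
    ext t
    show φ ((s + s') * t) = φ (s * t) + φ (s' * t)
    rw [add_mul, map_add]
  zero_smul φ := by
    ext t
    show φ (0 * t) = 0
    rw [zero_mul, map_zero]

/-- The `ModuleCat`-valued `Ext` of two modules. -/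
abbrev extMod (R : Type u) [CommRing R] (M N : Type u)
    [AddCommGroup M] [Module R M] [AddCommGroup N] [Module R N] (i : ℕ) : ModuleCat.{u} R :=
  ((Ext R (ModuleCat.{u} R) i).obj (Opposite.op (ModuleCat.of R M))).obj (ModuleCat.of R N)

/-- `C` is a semidualizing `R`-module. -/
def IsSemidualizing (R : Type u) [CommRing R]
    (C : Type u) [AddCommGroup C] [Module R C] : Prop :=
  Module.Finite R C ∧
  Function.Bijective (fun r : R => (r • LinearMap.id : C →ₗ[R] C)) ∧
  ∀ i : ℕ, 1 ≤ i → Subsingleton (extMod R C C i)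

/-- Property (*) for the triple `(R, S, C)`, relative to the retraction `g` of the
algebra map `R → S`. -/
def PropertyStar (R S : Type u) [CommRing R] [CommRing S] [Algebra R S] (g : S →+* R)
    (C : Type u) [AddCommGroup C] [Module R C] : Prop :=
  g.comp (algebraMap R S) = RingHom.id R ∧
  (letI : Module S (S →ₗ[R] C) := homModS C
   Nonempty ((S →ₗ[R] C) ≃ₗ[S] S)) ∧
  ∀ i : ℕ, 1 ≤ i → Subsingleton (extMod R S C i)

/-- Property (**): Property (*) together with `C ≅ ker g` as `R`-modules. -/
def PropertyStarStar (R S : Type u) [CommRing R] [CommRing S] [Algebra R S] (g : S →+* R)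
    (C : Type u) [AddCommGroup C] [Module R C] : Prop :=
  PropertyStar R S g C ∧
  (letI : Module R ↥(RingHom.ker g) := Module.compHom _ (algebraMap R S)
   Nonempty (↥(RingHom.ker g) ≃ₗ[R] C))



/-! ### Auxiliary material -/

open CategoryTheory Limits Opposite

section LeftDerivedAdditive

variable {𝒞 : Type*} [Category 𝒞] {𝒟 : Type*} [Category 𝒟]
  [Abelian 𝒞] [HasProjectiveResolutions 𝒞] [Abelian 𝒟]

instance Functor.leftDerived_additive (F : 𝒞 ⥤ 𝒟) [F.Additive] (n : ℕ) :
    (F.leftDerived n).Additive where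
  map_add {X Y f g} := by
    obtain ⟨P⟩ : Nonempty (ProjectiveResolution X) := HasProjectiveResolution.out
    obtain ⟨Q⟩ : Nonempty (ProjectiveResolution Y) := HasProjectiveResolution.out
    rw [F.leftDerived_map_eq n f (ProjectiveResolution.lift f P Q)
        (ProjectiveResolution.lift_commutes f P Q),
      F.leftDerived_map_eq n g (ProjectiveResolution.lift g P Q)
        (ProjectiveResolution.lift_commutes g P Q),
      F.leftDerived_map_eq n (f + g)
        (ProjectiveResolution.lift f P Q + ProjectiveResolution.lift g P Q)
        (by rw [Preadditive.add_comp, ProjectiveResolution.lift_commutes,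
            ProjectiveResolution.lift_commutes, Functor.map_add, Preadditive.comp_add]),
      Functor.map_add, Preadditive.add_comp, Preadditive.comp_add]

end LeftDerivedAdditive

lemma my_subsingleton_of_isZero {R : Type u} [CommRing R] {M : ModuleCat.{u} R}
    (h : IsZero M) : Subsingleton M := by
  have hid : (𝟙 M : M ⟶ M) = 0 := h.eq_of_src _ _
  refine ⟨fun a b => ?_⟩
  calc a = (𝟙 M : M ⟶ M) a := rfl
    _ = (0 : M ⟶ M) a := by rw [hid]
    _ = (0 : M ⟶ M) b := rfl
    _ = (𝟙 M : M ⟶ M) b := by rw [hid]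
    _ = b := rfl

lemma extMod_subsingleton_of_split (R : Type u) [CommRing R]
    (M N P Y : Type u) [AddCommGroup M] [Module R M] [AddCommGroup N] [Module R N]
    [AddCommGroup P] [Module R P] [AddCommGroup Y] [Module R Y]
    (i1 : N →ₗ[R] M) (p1 : M →ₗ[R] N) (i2 : P →ₗ[R] M) (p2 : M →ₗ[R] P)
    (hid : i1.comp p1 + i2.comp p2 = LinearMap.id) (n : ℕ)
    (h1 : Subsingleton (extMod R N Y n)) (h2 : Subsingleton (extMod R P Y n)) :
    Subsingleton (extMod R M Y n) := by
  let E : (ModuleCat.{u} R)ᵒᵖ ⥤ ModuleCat.{u} R :=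
    (((linearYoneda R (ModuleCat.{u} R)).obj (ModuleCat.of R Y)).rightOp.leftDerived n).leftOp
  haveI : E.Additive := inferInstance
  let f1 : ModuleCat.of R N ⟶ ModuleCat.of R M := ModuleCat.ofHom i1
  let g1 : ModuleCat.of R M ⟶ ModuleCat.of R N := ModuleCat.ofHom p1
  let f2 : ModuleCat.of R P ⟶ ModuleCat.of R M := ModuleCat.ofHom i2
  let g2 : ModuleCat.of R M ⟶ ModuleCat.of R P := ModuleCat.ofHom p2
  have hsum : g1 ≫ f1 + g2 ≫ f2 = 𝟙 (ModuleCat.of R M) := ModuleCat.hom_ext hid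
  have key : ∀ x : extMod R M Y n, x = 0 := by
    intro x
    have hx : x = (E.map (𝟙 (op (ModuleCat.of R M)))) x := by
      rw [E.map_id]; rfl
    have h1' : (𝟙 (op (ModuleCat.of R M)) : _) = f1.op ≫ g1.op + f2.op ≫ g2.op := by
      rw [← op_comp, ← op_comp, ← op_add, hsum]; rfl
    rw [hx, h1', E.map_add, E.map_comp, E.map_comp]
    have z1 : (E.map f1.op) x = 0 := Subsingleton.elim (α := extMod R N Y n) _ _
    have z2 : (E.map f2.op) x = 0 := Subsingleton.elim (α := extMod R P Y n) _ _
    show (E.map f1.op ≫ E.map g1.op) x + (E.map f2.op ≫ E.map g2.op) x = 0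
    show (E.map g1.op) ((E.map f1.op) x) + (E.map g2.op) ((E.map f2.op) x) = 0
    rw [z1, z2, map_zero, map_zero, add_zero]
  exact ⟨fun a b => by rw [key a, key b]⟩

lemma extMod_R_subsingleton (R : Type u) [CommRing R] (Y : Type u) [AddCommGroup Y] [Module R Y]
    (i : ℕ) (hi : 1 ≤ i) : Subsingleton (extMod R R Y i) := by
  obtain ⟨j, rfl⟩ : ∃ j, i = j + 1 := ⟨i - 1, (Nat.succ_pred_eq_of_pos hi).symm⟩
  haveI : Projective (ModuleCat.of R R) :=
    (IsProjective.iff_projective (R := R) R).mp (inferInstance : Module.Projective R R)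
  exact my_subsingleton_of_isZero
    (isZero_Ext_succ_of_projective (ModuleCat.of R R) (ModuleCat.of R Y) j)

namespace AmalgDup

variable {R : Type u} [CommRing R] {C : Ideal R}

instance instAlgebra : Algebra R (AmalgDup R C) := (AmalgDup.incl : R →+* AmalgDup R C).toAlgebra

@[simp] theorem incl_fst (r : R) : (incl r : AmalgDup R C).fst = r := rfl

@[simp] theorem incl_snd (r : R) : ((incl r : AmalgDup R C).snd : R) = 0 := rfl

theorem smul_def' (r : R) (p : AmalgDup R C) : r • p = incl r * p := rfl

@[simp] theorem smul_fst (r : R) (p : AmalgDup R C) : (r • p).fst = r * p.fst := by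
  rw [smul_def']; simp

@[simp] theorem smul_snd (r : R) (p : AmalgDup R C) :
    ((r • p).snd : R) = r * (p.snd : R) := by
  rw [smul_def']; simp

/-- The inclusion `R → R ⋈ C` as an `R`-linear map. -/
def inl : R →ₗ[R] AmalgDup R C where
  toFun r := mk r 0
  map_add' r s := (ext' (by simp) (by simp)).symm
  map_smul' r s := (ext' (by simp) (by simp)).symm

/-- The inclusion `C → R ⋈ C` as an `R`-linear map. -/
def inr : C →ₗ[R] AmalgDup R C where
  toFun c := mk 0 c
  map_add' c d := (ext' (by simp) (by simp)).symm
  map_smul' r c := (ext' (by simp) (by simp)).symm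

@[simp] theorem inl_fst (r : R) : (inl r : AmalgDup R C).fst = r := rfl
@[simp] theorem inl_snd (r : R) : ((inl r : AmalgDup R C).snd : R) = 0 := rfl
@[simp] theorem inr_fst (c : C) : (inr c : AmalgDup R C).fst = 0 := rfl
@[simp] theorem inr_snd (c : C) : ((inr c : AmalgDup R C).snd : R) = (c : R) := rfl

/-- The projection `R ⋈ C → R` as an `R`-linear map. -/
def prl : AmalgDup R C →ₗ[R] R where
  toFun p := p.fst
  map_add' p q := rfl
  map_smul' r p := by simp

/-- The projection `R ⋈ C → C` as an `R`-linear map. -/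
def prr : AmalgDup R C →ₗ[R] C where
  toFun p := p.snd
  map_add' p q := rfl
  map_smul' r p := Subtype.ext (by simp)

@[simp] theorem prl_apply (p : AmalgDup R C) : (prl p : R) = p.fst := rfl
@[simp] theorem prr_apply (p : AmalgDup R C) : (prr p : C) = p.snd := rfl

theorem split_id : (inl : R →ₗ[R] AmalgDup R C).comp prl + inr.comp prr = LinearMap.id := by
  apply LinearMap.ext; intro p
  refine ext' ?_ ?_ <;>
    simp [LinearMap.add_apply, LinearMap.comp_apply]

instance instModHom : Module (AmalgDup R C) (AmalgDup R C →ₗ[R] ↥C) := homModS ↥C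

theorem hsmul_apply (s : AmalgDup R C) (φ : AmalgDup R C →ₗ[R] ↥C) (t : AmalgDup R C) :
    (s • φ) t = φ (s * t) := rfl

section Equiv

variable (hbij : Function.Bijective (fun r : R => (r • LinearMap.id : ↥C →ₗ[R] ↥C)))

/-- Inverse of the homothety map. -/
noncomputable def rho (ψ : ↥C →ₗ[R] ↥C) : R := (Equiv.ofBijective _ hbij).symm ψ

theorem theta_rho (ψ : ↥C →ₗ[R] ↥C) :
    rho hbij ψ • (LinearMap.id : ↥C →ₗ[R] ↥C) = ψ :=
  (Equiv.ofBijective _ hbij).apply_symm_apply ψ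

theorem rho_theta (r : R) : rho hbij (r • (LinearMap.id : ↥C →ₗ[R] ↥C)) = r :=
  (Equiv.ofBijective _ hbij).symm_apply_apply r

theorem rho_spec (ψ : ↥C →ₗ[R] ↥C) (c : C) : (ψ c : R) = rho hbij ψ * (c : R) := by
  conv_lhs => rw [← theta_rho hbij ψ]
  simp

theorem rho_add (ψ χ : ↥C →ₗ[R] ↥C) : rho hbij (ψ + χ) = rho hbij ψ + rho hbij χ := by
  apply hbij.injective
  show rho hbij (ψ + χ) • (LinearMap.id : ↥C →ₗ[R] ↥C)
    = (rho hbij ψ + rho hbij χ) • (LinearMap.id : ↥C →ₗ[R] ↥C)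
  rw [theta_rho, add_smul, theta_rho, theta_rho]

theorem rho_smul (r : R) (ψ : ↥C →ₗ[R] ↥C) : rho hbij (r • ψ) = r * rho hbij ψ := by
  apply hbij.injective
  show rho hbij (r • ψ) • (LinearMap.id : ↥C →ₗ[R] ↥C)
    = (r * rho hbij ψ) • (LinearMap.id : ↥C →ₗ[R] ↥C)
  rw [theta_rho, mul_smul, theta_rho]

/-- The backward map `R ⋈ C → Hom_R(R ⋈ C, C)`. -/
def bwd (s : AmalgDup R C) : AmalgDup R C →ₗ[R] ↥C where
  toFun p := ⟨p.fst * (s.snd : R) + (s.fst + (s.snd : R)) * (p.snd : R),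
    add_mem (C.mul_mem_left _ s.snd.2) (C.mul_mem_left _ p.snd.2)⟩
  map_add' p q := Subtype.ext (by
    simp only [add_fst, add_snd, Submodule.coe_add]; ring)
  map_smul' r p := Subtype.ext (by
    simp only [smul_fst, smul_snd, SetLike.val_smul, smul_eq_mul, RingHom.id_apply]; ring)

@[simp] theorem bwd_apply_coe (s p : AmalgDup R C) :
    ((bwd s p : C) : R) = p.fst * (s.snd : R) + (s.fst + (s.snd : R)) * (p.snd : R) := rfl

theorem decomp (p : AmalgDup R C) : p = p.fst • (1 : AmalgDup R C) + inr p.snd :=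
  ext' (by simp) (by simp)

/-- The `R ⋈ C`-linear equivalence `Hom_R(R ⋈ C, C) ≃ R ⋈ C`. -/
noncomputable def theEquiv : (AmalgDup R C →ₗ[R] ↥C) ≃ₗ[AmalgDup R C] AmalgDup R C where
  toFun φ := mk (rho hbij (φ ∘ₗ inr) - (φ 1 : R)) (φ 1)
  invFun s := bwd s
  left_inv φ := by
    apply LinearMap.ext; intro p
    apply Subtype.ext
    have key : ((φ (inr p.snd)) : R) = rho hbij (φ ∘ₗ inr) * ((p.snd : C) : R) := by
      have h := rho_spec hbij (φ ∘ₗ inr) p.snd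
      rwa [LinearMap.comp_apply] at h
    conv_rhs => rw [decomp p]
    rw [map_add, map_smul]
    simp only [bwd_apply_coe, mk_fst, mk_snd, Submodule.coe_add, SetLike.val_smul,
      smul_eq_mul, key]
    ring
  right_inv s := by
    have h1 : bwd s (1 : AmalgDup R C) = s.snd := Subtype.ext (by simp)
    have h2 : (bwd s) ∘ₗ inr = (s.fst + (s.snd : R)) • (LinearMap.id : ↥C →ₗ[R] ↥C) := by
      apply LinearMap.ext; intro c
      apply Subtype.ext
      simp only [LinearMap.comp_apply, bwd_apply_coe, inr_fst, inr_snd, zero_mul, zero_add,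
        LinearMap.smul_apply, LinearMap.id_coe, id_eq, SetLike.val_smul, smul_eq_mul]
    refine ext' ?_ ?_
    · rw [mk_fst, h1, h2, rho_theta]
      ring
    · rw [mk_snd, h1]
  map_add' φ ψ := by
    have hc : (φ + ψ) ∘ₗ inr = φ ∘ₗ inr + ψ ∘ₗ inr := LinearMap.add_comp _ _ _
    refine ext' ?_ ?_
    · rw [mk_fst, hc, rho_add, add_fst, mk_fst, mk_fst]
      simp only [LinearMap.add_apply, Submodule.coe_add]
      ring
    · rw [mk_snd, add_snd, mk_snd, mk_snd]
      simp only [LinearMap.add_apply, Submodule.coe_add]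
  map_smul' s φ := by
    have hone : ((s • φ) (1 : AmalgDup R C) : R) = s.fst * (φ 1 : R)
        + rho hbij (φ ∘ₗ inr) * (s.snd : R) := by
      have key : ((φ (inr s.snd)) : R) = rho hbij (φ ∘ₗ inr) * ((s.snd : C) : R) := by
        have h := rho_spec hbij (φ ∘ₗ inr) s.snd
        rwa [LinearMap.comp_apply] at h
      rw [hsmul_apply, mul_one]
      conv_lhs => rw [decomp s]
      rw [map_add, map_smul]
      simp only [Submodule.coe_add, SetLike.val_smul, smul_eq_mul, key]
    have hcomp : (s • φ) ∘ₗ inr = (s.fst + (s.snd : R)) • (φ ∘ₗ inr) := by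
      apply LinearMap.ext; intro c
      apply Subtype.ext
      have hmul : s * inr c = inr ((s.fst + (s.snd : R)) • c) := ext' (by simp) (by simp; ring)
      show ((φ (s * inr c)) : R) = (((s.fst + (s.snd : R)) • (φ ∘ₗ inr)) c : R)
      rw [hmul, ← LinearMap.comp_apply, map_smul, LinearMap.smul_apply]
    show mk (rho hbij ((s • φ) ∘ₗ inr) - ((s • φ) 1 : R)) ((s • φ) 1)
      = s • mk (rho hbij (φ ∘ₗ inr) - (φ 1 : R)) (φ 1)
    rw [hcomp, rho_smul]
    have hs : s • mk (rho hbij (φ ∘ₗ inr) - (φ 1 : R)) (φ 1)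
        = s * mk (rho hbij (φ ∘ₗ inr) - (φ 1 : R)) (φ 1) := rfl
    rw [hs]
    refine ext' ?_ ?_
    · rw [mk_fst, mul_fst, mk_fst, hone]
      ring
    · rw [mk_snd, mul_snd, mk_fst, mk_snd, hone]
      ring

end Equiv

end AmalgDup

/-- If an ideal `C` of `R` is semidualizing as an `R`-module, then
`Hom_R(R ⋈ C, C) ≅ R ⋈ C` as `R ⋈ C`-modules, and `Ext_R^i(R ⋈ C, C) = 0` for all
`i ≥ 1`.  Here `R ⋈ C` is an `R`-module via `f : r ↦ (r, 0)`, and `Hom_R(R ⋈ C, C)` is an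
`R ⋈ C`-module via the action on the first slot. -/
theorem amalgDup_hom_iso_and_ext_vanishing (R : Type u) [CommRing R] [IsNoetherianRing R]
    (C : Ideal R) (hC : IsSemidualizing R ↥C) :
    letI : Algebra R (AmalgDup R C) := (AmalgDup.incl : R →+* AmalgDup R C).toAlgebra
    letI : Module (AmalgDup R C) (AmalgDup R C →ₗ[R] ↥C) := homModS ↥C
    Nonempty ((AmalgDup R C →ₗ[R] ↥C) ≃ₗ[AmalgDup R C] AmalgDup R C) ∧
    ∀ i : ℕ, 1 ≤ i → Subsingleton (extMod R (AmalgDup R C) ↥C i) := by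
  refine ⟨⟨AmalgDup.theEquiv hC.2.1⟩, fun i hi => ?_⟩
  exact extMod_subsingleton_of_split R (AmalgDup R C) R ↥C ↥C
    AmalgDup.inl AmalgDup.prl AmalgDup.inr AmalgDup.prr AmalgDup.split_id i
    (extMod_R_subsingleton R ↥C i hi) (hC.2.2 i hi)

end
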